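/- Let γ ∈ (-1,1) and define φ_s(θ) = arctan((4(1-γ) sin θ cos θ - π(1+γ))/(4(1-γ) cos²θ)) for θ ∈ (-π/2, π/2). Then φ_s is strictly increasing on a neighborhood of θ = 0; in particular, if θ > 0 is sufficiently small then φ_s(θ) > φ_s(0), i.e., a positive shaping-filter phase at the bandwidth frequency introduces a positive phase lead to the shaped Clegg Integrator. -/

import Mathlib

open Real

theorem shaped_CI_phase_lead_near_zero
    (γ : ℝ) (hγ : γ ∈ Set.Ioo (-1 : ℝ) 1)
    (φs : ℝ → ℝ)
    (hφs : ∀ θ, φs θ = Real.arctan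
      ((4 * (1 - γ) * Real.sin θ * Real.cos θ - π * (1 + γ)) / (4 * (1 - γ) * (Real.cos θ) ^ 2))) :
    ∃ ε > 0, StrictMonoOn φs (Set.Ioo (-ε) ε) ∧
      ∀ θ, 0 < θ → θ < ε → φs 0 < φs θ := by
  obtain ⟨hγ1, hγ2⟩ := hγ
  set c : ℝ := π * (1 + γ) / (4 * (1 - γ)) with hc_def
  have h1γ : (0:ℝ) < 1 - γ := by linarith
  have h1γ' : (0:ℝ) < 1 + γ := by linarith
  have hc : 0 < c := div_pos (by positivity) (by linarith)
  set ε : ℝ := Real.arctan (1 / (2 * c)) with hε_def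
  have hε_pos : 0 < ε := by
    have h := Real.arctan_strictMono (show (0:ℝ) < 1 / (2 * c) by positivity)
    rwa [Real.arctan_zero] at h
  have hε_lt : ε < π / 2 := Real.arctan_lt_pi_div_two _
  have htanε : Real.tan ε = 1 / (2 * c) := Real.tan_arctan _
  set g : ℝ → ℝ := fun θ => Real.sin θ / Real.cos θ - c / (Real.cos θ) ^ 2 with hg_def
  have hcos : ∀ θ ∈ Set.Ioo (-ε) ε, 0 < Real.cos θ := by
    intro θ hθ
    exact Real.cos_pos_of_mem_Ioo ⟨by linarith [hθ.1], by linarith [hθ.2]⟩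
  have hkey : ∀ θ ∈ Set.Ioo (-ε) ε, 2 * c * Real.sin θ < Real.cos θ := by
    intro θ hθ
    have hcθ := hcos θ hθ
    have htan : Real.tan θ < 1 / (2 * c) := by
      rw [← htanε]
      exact Real.tan_lt_tan_of_lt_of_lt_pi_div_two (by linarith [hθ.1]) hε_lt hθ.2
    have hsin : Real.sin θ = Real.tan θ * Real.cos θ := by
      rw [Real.tan_eq_sin_div_cos]; field_simp
    have h2c : (0:ℝ) < 2 * c := by positivity
    have h2 : Real.tan θ * Real.cos θ < (1 / (2 * c)) * Real.cos θ :=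
      mul_lt_mul_of_pos_right htan hcθ
    rw [hsin]
    calc 2 * c * (Real.tan θ * Real.cos θ) < 2 * c * ((1 / (2 * c)) * Real.cos θ) :=
          mul_lt_mul_of_pos_left h2 h2c
      _ = Real.cos θ := by field_simp
  have hφg : ∀ θ ∈ Set.Ioo (-ε) ε, φs θ = Real.arctan (g θ) := by
    intro θ hθ
    have hcθ := (hcos θ hθ).ne'
    rw [hφs θ]
    congr 1
    rw [hg_def, hc_def]
    field_simp
  have hgmono : StrictMonoOn g (Set.Ioo (-ε) ε) := by
    apply strictMonoOn_of_deriv_pos (convex_Ioo _ _)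
    · apply ContinuousOn.sub
      · exact (Real.continuous_sin.continuousOn).div Real.continuous_cos.continuousOn
          (fun θ hθ => (hcos θ hθ).ne')
      · exact continuousOn_const.div ((Real.continuous_cos.continuousOn).pow 2)
          (fun θ hθ => pow_ne_zero 2 (hcos θ hθ).ne')
    · intro θ hθ
      rw [interior_Ioo] at hθ
      have hcθ : 0 < Real.cos θ := hcos θ hθ
      have hcθ' : Real.cos θ ≠ 0 := hcθ.ne'
      have h1 : HasDerivAt (fun x => Real.sin x / Real.cos x)
          ((Real.cos θ * Real.cos θ - Real.sin θ * -Real.sin θ) / Real.cos θ ^ 2) θ :=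
        (Real.hasDerivAt_sin θ).div (Real.hasDerivAt_cos θ) hcθ'
      have h2 : HasDerivAt (fun x => (Real.cos x) ^ 2)
          (((2:ℕ) : ℝ) * Real.cos θ ^ (2 - 1) * -Real.sin θ) θ :=
        (Real.hasDerivAt_cos θ).pow 2
      have h3 : HasDerivAt (fun x => c / (Real.cos x) ^ 2)
          ((0 * Real.cos θ ^ 2 - c * (((2:ℕ) : ℝ) * Real.cos θ ^ (2 - 1) * -Real.sin θ)) /
            (Real.cos θ ^ 2) ^ 2) θ :=
        (hasDerivAt_const θ c).div h2 (pow_ne_zero 2 hcθ')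
      have hD : HasDerivAt g
          ((Real.cos θ * Real.cos θ - Real.sin θ * -Real.sin θ) / Real.cos θ ^ 2 -
            (0 * Real.cos θ ^ 2 - c * (((2:ℕ) : ℝ) * Real.cos θ ^ (2 - 1) * -Real.sin θ)) /
              (Real.cos θ ^ 2) ^ 2) θ := h1.sub h3
      rw [hD.deriv]
      have hone : Real.cos θ * Real.cos θ - Real.sin θ * -Real.sin θ = 1 := by
        nlinarith [Real.sin_sq_add_cos_sq θ]
      have heq : (Real.cos θ * Real.cos θ - Real.sin θ * -Real.sin θ) / Real.cos θ ^ 2 -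
            (0 * Real.cos θ ^ 2 - c * (((2:ℕ) : ℝ) * Real.cos θ ^ (2 - 1) * -Real.sin θ)) /
              (Real.cos θ ^ 2) ^ 2 =
          (Real.cos θ - 2 * c * Real.sin θ) / Real.cos θ ^ 3 := by
        rw [hone]
        field_simp
        ring
      rw [heq]
      exact div_pos (by linarith [hkey θ hθ]) (by positivity)
  have hmono : StrictMonoOn φs (Set.Ioo (-ε) ε) := by
    intro a ha b hb hab
    rw [hφg a ha, hφg b hb]
    exact Real.arctan_strictMono (hgmono ha hb hab)
  refine ⟨ε, hε_pos, hmono, fun θ h1 h2 => ?_⟩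
  exact hmono ⟨by linarith, hε_pos⟩ ⟨by linarith, h2⟩ h1
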